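/- Let S be a nonnegative random variable with E[e^{-r S}] = e^{-B(r) t} for all r ≥ 0, where B is a Bernstein function with B(0) = 0, B(r) > 0 for r > 0, and B(r) ≥ k r^α for r ≥ λ₁ (k, λ₁ > 0, α ∈ (0,1]). Then for any d > 0 there exists c > 0 such that E[S^{-d}] ≤ c (min(1,t))^{-d/α} for all t > 0. -/

import Mathlib

open MeasureTheory
open scoped ENNReal
set_option maxHeartbeats 1000000

lemma aux_int {p q b : ℝ} (hp : 0 < p) (hq : -1 < q) (hb : 0 < b) :
    IntegrableOn (fun x : ℝ => x ^ q * Real.exp (-b * x ^ p)) (Set.Ioi 0) := by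
  set s := (q + 1) / p with hs
  have hspos : 0 < s := div_pos (by linarith) hp
  have h0 : IntegrableOn (fun y : ℝ => Real.exp (-y) * y ^ (s - 1)) (Set.Ioi 0) :=
    Real.GammaIntegral_convergent hspos
  have h1 : IntegrableOn (fun y : ℝ => Real.exp (-(b*y)) * (b*y) ^ (s - 1)) (Set.Ioi 0) := by
    have := (integrableOn_Ioi_comp_mul_left_iff
      (fun y : ℝ => Real.exp (-y) * y ^ (s - 1)) 0 hb).mpr (by simpa using h0)
    simpa using this
  have hbne : (b : ℝ) ^ (s - 1) ≠ 0 := (Real.rpow_pos_of_pos hb _).ne'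
  have h2 : IntegrableOn (fun y : ℝ => Real.exp (-(b*y)) * y ^ (s - 1)) (Set.Ioi 0) := by
    have h3 : IntegrableOn (fun y : ℝ => ((b : ℝ) ^ (s - 1))⁻¹ *
        (Real.exp (-(b*y)) * (b*y) ^ (s - 1))) (Set.Ioi 0) := h1.const_mul _
    refine h3.congr_fun (fun y hy => ?_) measurableSet_Ioi
    dsimp only
    rw [Real.mul_rpow hb.le (le_of_lt hy)]
    field_simp
  have h3 := (integrableOn_Ioi_comp_rpow_iff'
    (fun y : ℝ => Real.exp (-(b*y)) * y ^ (s - 1)) hp.ne').mpr h2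
  refine h3.congr_fun (fun x hx => ?_) measurableSet_Ioi
  have hx0 : (0:ℝ) < x := hx
  have key : x ^ (p - 1) * (x ^ p) ^ (s - 1) = x ^ q := by
    rw [← Real.rpow_mul hx0.le, ← Real.rpow_add hx0]
    congr 1
    rw [hs]
    field_simp
    ring
  calc x ^ (p-1) • (Real.exp (-(b*x^p)) * (x^p)^(s-1))
      = (x^(p-1) * (x^p)^(s-1)) * Real.exp (-(b*x^p)) := by rw [smul_eq_mul]; ring
    _ = x^q * Real.exp (-b * x^p) := by rw [key, neg_mul]



/-- Negative moments of a subordinator: if `S_t ≥ 0` has Laplace transform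
`E[e^{-r S_t}] = e^{-B(r)t}` with `B` a Bernstein function, `B(0)=0`, `B>0` on `(0,∞)`,
nondecreasing and concave, and `B(r) ≥ k r^α` for `r ≥ λ₁`, then for any `d > 0`
there is `c > 0` such that `E[S_t^{-d}] ≤ c (min(1,t))^{-d/α}` for all `t > 0`. -/
theorem stmt5 {Ω : Type*} [MeasureSpace Ω] [IsProbabilityMeasure (volume : Measure Ω)]
    (S : ℝ → Ω → ℝ) (B : ℝ → ℝ) (k lam₁ α : ℝ)
    (hk : 0 < k) (hlam₁ : 0 < lam₁) (hα : 0 < α) (hα1 : α ≤ 1)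
    (hB0 : B 0 = 0) (hBpos : ∀ r : ℝ, 0 < r → 0 < B r)
    (hBmono : MonotoneOn B (Set.Ici (0:ℝ))) (hBconc : ConcaveOn ℝ (Set.Ici (0:ℝ)) B)
    (hSnn : ∀ t : ℝ, 0 < t → ∀ ω, 0 ≤ S t ω)
    (hLap : ∀ t : ℝ, 0 < t → ∀ r : ℝ, 0 ≤ r →
      (∫ ω, Real.exp (-(r * S t ω))) = Real.exp (-(B r * t)))
    (hBlow : ∀ r : ℝ, lam₁ ≤ r → k * r ^ α ≤ B r) :
    ∀ d : ℝ, 0 < d → ∃ c : ℝ, 0 < c ∧ ∀ t : ℝ, 0 < t →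
      (∫ ω, (S t ω) ^ (-d)) ≤ c * (min 1 t) ^ (-(d/α)) := by
  intro d hd
  have hΓd : 0 < Real.Gamma d := Real.Gamma_pos_of_pos hd
  set β := d / α with hβdef
  have hβ : 0 < β := div_pos hd hα
  have hΓβ : 0 < Real.Gamma β := Real.Gamma_pos_of_pos hβ
  set M : ℝ := lam₁ ^ d / d + k ^ (-β) * (1/α) * Real.Gamma β with hM
  have hMpos : 0 < M := by positivity
  refine ⟨M / Real.Gamma d, by positivity, ?_⟩
  intro t ht
  set s := min 1 t with hsdef
  have hs : 0 < s := lt_min one_pos ht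
  have hs1 : s ≤ 1 := min_le_left _ _
  have hst : s ≤ t := min_le_right _ _
  have hsβ : (1:ℝ) ≤ s ^ (-β) := by
    rw [← Real.rpow_zero s]
    exact Real.rpow_le_rpow_of_exponent_ge hs hs1 (by linarith)
  have hBnn : ∀ r : ℝ, 0 ≤ r → 0 ≤ B r := by
    intro r hr
    rcases eq_or_lt_of_le hr with h | h
    · rw [← h, hB0]
    · exact (hBpos r h).le
  -- integrability of the exponentials
  have hInt : ∀ r : ℝ, 0 ≤ r → Integrable (fun ω => Real.exp (-(r * S t ω))) := by
    intro r hr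
    by_contra h
    have h2 := hLap t ht r hr
    rw [integral_undef h] at h2
    exact (Real.exp_pos _).ne' h2.symm
  have hSmeas : AEMeasurable (S t) (volume : Measure Ω) := by
    have h1 : AEMeasurable (fun ω => Real.exp (-(S t ω))) (volume : Measure Ω) := by
      have := (hInt 1 zero_le_one).aestronglyMeasurable.aemeasurable
      simpa using this
    have h2 := (Real.measurable_log.comp_aemeasurable h1).neg
    refine h2.congr (Filter.Eventually.of_forall fun ω => ?_)
    simp [Real.log_exp]
  set f : Ω → ℝ := fun ω => (S t ω) ^ (-d) with hf
  have hfm : AEStronglyMeasurable f (volume : Measure Ω) := by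
    apply AEMeasurable.aestronglyMeasurable
    fun_prop
  set F : ℝ≥0∞ := ∫⁻ ω, ENNReal.ofReal (f ω) with hF
  set G : ℝ → ℝ≥0∞ := fun r => ENNReal.ofReal (r ^ (d-1) * Real.exp (-(B r * t))) with hG
  -- Claim A
  have claimA : ENNReal.ofReal (Real.Gamma d) * F ≤ ∫⁻ r in Set.Ioi 0, G r := by
    have step1 : ENNReal.ofReal (Real.Gamma d) * F
        = ∫⁻ ω, ENNReal.ofReal (Real.Gamma d) * ENNReal.ofReal (f ω) :=
      (lintegral_const_mul' _ _ ENNReal.ofReal_ne_top).symm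
    have step2 : ∀ ω : Ω, ENNReal.ofReal (Real.Gamma d) * ENNReal.ofReal (f ω)
        ≤ ∫⁻ r in Set.Ioi 0, ENNReal.ofReal (r ^ (d-1) * Real.exp (-(r * S t ω))) := by
      intro ω
      rcases eq_or_lt_of_le (hSnn t ht ω) with hx0 | hx0
      · have hfω : f ω = 0 := by
          show (S t ω) ^ (-d) = 0
          rw [← hx0, Real.zero_rpow (neg_ne_zero.mpr hd.ne')]
        rw [hfω]
        simp
      · set x := S t ω with hx
        have hint : IntegrableOn (fun r : ℝ => r ^ (d-1) * Real.exp (-(r * x)))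
            (Set.Ioi 0) := by
          have h5 := aux_int one_pos (by linarith : (-1:ℝ) < d-1) hx0
          refine h5.congr_fun (fun r hr => ?_) measurableSet_Ioi
          dsimp only
          rw [Real.rpow_one]
          ring_nf
        have hnn : 0 ≤ᵐ[(volume : Measure ℝ).restrict (Set.Ioi 0)]
            fun r : ℝ => r ^ (d-1) * Real.exp (-(r * x)) :=
          ae_restrict_of_forall_mem measurableSet_Ioi fun r hr => by
            have hr' : (0:ℝ) < r := hr
            positivity
        have hval : ∫ r in Set.Ioi 0, r ^ (d-1) * Real.exp (-(r * x))
            = (1/x) ^ d * Real.Gamma d := by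
          rw [← Real.integral_rpow_mul_exp_neg_mul_Ioi hd hx0]
          exact setIntegral_congr_fun measurableSet_Ioi fun r _ => by rw [mul_comm x r]
        have heq : Real.Gamma d * f ω = (1/x) ^ d * Real.Gamma d := by
          show Real.Gamma d * x ^ (-d) = (1/x) ^ d * Real.Gamma d
          rw [one_div, Real.inv_rpow (le_of_lt hx0), ← Real.rpow_neg (le_of_lt hx0)]
          ring
        rw [← ENNReal.ofReal_mul hΓd.le, heq, ← hval,
          ofReal_integral_eq_lintegral_ofReal hint hnn]
    have hunc : AEMeasurable (Function.uncurry fun (ω : Ω) (r : ℝ) =>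
        ENNReal.ofReal (r ^ (d-1) * Real.exp (-(r * S t ω))))
        ((volume : Measure Ω).prod ((volume : Measure ℝ).restrict (Set.Ioi 0))) := by
      have hS1 : AEMeasurable (fun z : Ω × ℝ => S t z.1)
          ((volume : Measure Ω).prod ((volume : Measure ℝ).restrict (Set.Ioi 0))) :=
        hSmeas.comp_quasiMeasurePreserving Measure.quasiMeasurePreserving_fst
      apply ENNReal.measurable_ofReal.comp_aemeasurable
      exact ((measurable_snd.aemeasurable.pow aemeasurable_const).mul
        (Real.measurable_exp.comp_aemeasurable
          ((measurable_snd.aemeasurable.mul hS1).neg)))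
    have hswap : (∫⁻ ω, ∫⁻ r in Set.Ioi 0,
          ENNReal.ofReal (r ^ (d-1) * Real.exp (-(r * S t ω))))
        = ∫⁻ r in Set.Ioi 0, ∫⁻ ω,
          ENNReal.ofReal (r ^ (d-1) * Real.exp (-(r * S t ω))) :=
      lintegral_lintegral_swap hunc
    have hinner : ∀ r : ℝ, r ∈ Set.Ioi (0:ℝ) →
        (∫⁻ ω, ENNReal.ofReal (r ^ (d-1) * Real.exp (-(r * S t ω)))) = G r := by
      intro r hr
      have hr0 : (0:ℝ) < r := hr
      have h1 : ∀ ω : Ω, ENNReal.ofReal (r ^ (d-1) * Real.exp (-(r * S t ω)))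
          = ENNReal.ofReal (r ^ (d-1)) * ENNReal.ofReal (Real.exp (-(r * S t ω))) :=
        fun ω => ENNReal.ofReal_mul (Real.rpow_nonneg hr0.le _)
      simp only [h1]
      rw [lintegral_const_mul' _ _ ENNReal.ofReal_ne_top,
        ← ofReal_integral_eq_lintegral_ofReal (hInt r hr0.le)
          (Filter.Eventually.of_forall fun ω => (Real.exp_pos _).le),
        hLap t ht r hr0.le]
      simp only [hG]
      rw [← ENNReal.ofReal_mul (Real.rpow_nonneg hr0.le _)]
    calc ENNReal.ofReal (Real.Gamma d) * F
        = ∫⁻ ω, ENNReal.ofReal (Real.Gamma d) * ENNReal.ofReal (f ω) := step1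
      _ ≤ ∫⁻ ω, ∫⁻ r in Set.Ioi 0,
            ENNReal.ofReal (r ^ (d-1) * Real.exp (-(r * S t ω))) := lintegral_mono step2
      _ = ∫⁻ r in Set.Ioi 0, ∫⁻ ω,
            ENNReal.ofReal (r ^ (d-1) * Real.exp (-(r * S t ω))) := hswap
      _ = ∫⁻ r in Set.Ioi 0, G r :=
          setLIntegral_congr_fun measurableSet_Ioi (fun r hr => hinner r hr)
  -- Claim B
  have claimB : (∫⁻ r in Set.Ioi 0, G r) ≤ ENNReal.ofReal (M * s ^ (-β)) := by
    rw [show Set.Ioi (0:ℝ) = Set.Ioc 0 lam₁ ∪ Set.Ioi lam₁ from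
        (Set.Ioc_union_Ioi_eq_Ioi hlam₁.le).symm,
      lintegral_union measurableSet_Ioi Set.Ioc_disjoint_Ioi_same]
    have hP1 : (∫⁻ r in Set.Ioc 0 lam₁, G r)
        ≤ ENNReal.ofReal (lam₁ ^ d / d * s ^ (-β)) := by
      have hle : (∫⁻ r in Set.Ioc 0 lam₁, G r)
          ≤ ∫⁻ r in Set.Ioc 0 lam₁, ENNReal.ofReal (r ^ (d-1)) := by
        refine setLIntegral_mono (by fun_prop) (fun r hr => ?_)
        refine ENNReal.ofReal_le_ofReal ?_
        refine mul_le_of_le_one_right (Real.rpow_nonneg hr.1.le _) ?_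
        rw [Real.exp_le_one_iff, neg_nonpos]
        exact mul_nonneg (hBnn r hr.1.le) ht.le
      have hint1 : IntegrableOn (fun r : ℝ => r ^ (d-1)) (Set.Ioc 0 lam₁) := by
        have h6 := intervalIntegral.intervalIntegrable_rpow'
          (a := 0) (b := lam₁) (by linarith : (-1:ℝ) < d-1)
        rwa [intervalIntegrable_iff_integrableOn_Ioc_of_le hlam₁.le] at h6
      have hval1 : ∫ r in Set.Ioc 0 lam₁, r ^ (d-1) = lam₁ ^ d / d := by
        rw [← intervalIntegral.integral_of_le hlam₁.le,
          integral_rpow (Or.inl (by linarith : (-1:ℝ) < d-1)),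
          Real.zero_rpow (by linarith : d - 1 + 1 ≠ 0),
          show d - 1 + 1 = d by ring, sub_zero]
      calc (∫⁻ r in Set.Ioc 0 lam₁, G r)
          ≤ ∫⁻ r in Set.Ioc 0 lam₁, ENNReal.ofReal (r ^ (d-1)) := hle
        _ = ENNReal.ofReal (lam₁ ^ d / d) := by
            rw [← ofReal_integral_eq_lintegral_ofReal hint1
              (ae_restrict_of_forall_mem measurableSet_Ioc fun r hr =>
                Real.rpow_nonneg hr.1.le _), hval1]
        _ ≤ ENNReal.ofReal (lam₁ ^ d / d * s ^ (-β)) :=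
            ENNReal.ofReal_le_ofReal (le_mul_of_one_le_right (by positivity) hsβ)
    have hks : 0 < k * s := mul_pos hk hs
    have hP2 : (∫⁻ r in Set.Ioi lam₁, G r)
        ≤ ENNReal.ofReal (k ^ (-β) * (1/α) * Real.Gamma β * s ^ (-β)) := by
      have hle : (∫⁻ r in Set.Ioi lam₁, G r)
          ≤ ∫⁻ r in Set.Ioi lam₁,
              ENNReal.ofReal (r ^ (d-1) * Real.exp (-(k*s) * r ^ α)) := by
        refine setLIntegral_mono (by fun_prop) (fun r hr => ?_)
        have hr0 : (0:ℝ) < r := lt_trans hlam₁ hr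
        refine ENNReal.ofReal_le_ofReal
          (mul_le_mul_of_nonneg_left ?_ (Real.rpow_nonneg hr0.le _))
        rw [Real.exp_le_exp]
        have h1 : k * r ^ α * s ≤ B r * t :=
          mul_le_mul (hBlow r (le_of_lt hr)) hst hs.le (hBnn r hr0.le)
        nlinarith [h1]
      have hint2 := aux_int hα (by linarith : (-1:ℝ) < d - 1) hks
      have hval2 : (∫ r in Set.Ioi 0, r ^ (d-1) * Real.exp (-(k*s) * r ^ α))
          = (k*s) ^ (-β) * (1/α) * Real.Gamma β := by
        rw [integral_rpow_mul_exp_neg_mul_rpow hα (by linarith : (-1:ℝ) < d - 1) hks,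
          show d - 1 + 1 = d by ring, neg_div, hβdef]
      calc (∫⁻ r in Set.Ioi lam₁, G r)
          ≤ ∫⁻ r in Set.Ioi lam₁,
              ENNReal.ofReal (r ^ (d-1) * Real.exp (-(k*s) * r ^ α)) := hle
        _ ≤ ∫⁻ r in Set.Ioi 0,
              ENNReal.ofReal (r ^ (d-1) * Real.exp (-(k*s) * r ^ α)) :=
            lintegral_mono' (Measure.restrict_mono (Set.Ioi_subset_Ioi hlam₁.le) le_rfl) le_rfl
        _ = ENNReal.ofReal ((k*s) ^ (-β) * (1/α) * Real.Gamma β) := by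
            rw [← ofReal_integral_eq_lintegral_ofReal hint2
              (ae_restrict_of_forall_mem measurableSet_Ioi fun r hr => by
                have : (0:ℝ) < r := hr
                positivity), hval2]
        _ = ENNReal.ofReal (k ^ (-β) * (1/α) * Real.Gamma β * s ^ (-β)) := by
            rw [Real.mul_rpow hk.le hs.le]
            ring_nf
    calc (∫⁻ r in Set.Ioc 0 lam₁, G r) + ∫⁻ r in Set.Ioi lam₁, G r
        ≤ ENNReal.ofReal (lam₁ ^ d / d * s ^ (-β))
          + ENNReal.ofReal (k ^ (-β) * (1/α) * Real.Gamma β * s ^ (-β)) := add_le_add hP1 hP2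
      _ = ENNReal.ofReal (M * s ^ (-β)) := by
          rw [← ENNReal.ofReal_add (by positivity) (by positivity), hM]
          ring_nf
  -- conclude
  have hfinal : F ≤ ENNReal.ofReal (M / Real.Gamma d * s ^ (-β)) := by
    have h1 : ENNReal.ofReal (Real.Gamma d) * F
        ≤ ENNReal.ofReal (Real.Gamma d)
          * ENNReal.ofReal (M / Real.Gamma d * s ^ (-β)) := by
      rw [← ENNReal.ofReal_mul hΓd.le]
      refine (claimA.trans claimB).trans (le_of_eq ?_)
      congr 1
      field_simp
    exact (ENNReal.mul_le_mul_iff_right (ENNReal.ofReal_pos.mpr hΓd).ne'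
      ENNReal.ofReal_ne_top).mp h1
  have hnn : 0 ≤ᵐ[(volume : Measure Ω)] f :=
    Filter.Eventually.of_forall fun ω => Real.rpow_nonneg (hSnn t ht ω) _
  calc (∫ ω, (S t ω) ^ (-d)) = F.toReal := integral_eq_lintegral_of_nonneg_ae hnn hfm
    _ ≤ (ENNReal.ofReal (M / Real.Gamma d * s ^ (-β))).toReal :=
        ENNReal.toReal_mono ENNReal.ofReal_ne_top hfinal
    _ = M / Real.Gamma d * s ^ (-β) := ENNReal.toReal_ofReal (by positivity)
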